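/- Let X be a real reflexive Banach space and L : X → X* a bounded, demicontinuous, strictly monotone operator of type (S₊) which is coercive (⟨Lu,u⟩/‖u‖ → ∞ as ‖u‖ → ∞). Then L is a bijection from X onto X*, and its inverse T = L⁻¹ : X* → X is bounded and satisfies condition (S₊) in the sense that for vₙ ⇀ v in X* with limsup ⟨vₙ − v, Tvₙ − Tv⟩ ≤ 0, one has Tvₙ → Tv. -/

import Mathlib

open Filter Topology Bornology

variable {X : Type*} [NormedAddCommGroup X] [NormedSpace ℝ X]

/-- Weak convergence of a sequence in `X`. -/
def WeakConvSeq (u : ℕ → X) (x : X) : Prop :=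
  ∀ f : StrongDual ℝ X, Tendsto (fun n => f (u n)) atTop (𝓝 (f x))

open Module
open scoped RealInnerProductSpace

private lemma surjStrong : ∀ (n : ℕ) (E : Type) (_ : NormedAddCommGroup E),
    ∀ (_ : @InnerProductSpace ℝ E _ _), ∀ (_ : FiniteDimensional ℝ E),
    finrank ℝ E = n →
    ∀ (F : E → E) (c : ℝ), 0 < c → Continuous F →
    (∀ x y : E, c * ‖x - y‖ ^ 2 ≤ ⟪F x - F y, x - y⟫) → Function.Surjective F := by
  intro n
  induction n with
  | zero =>
    intro E _ _ _ hE F c hc hF hsm y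
    have : Subsingleton E := finrank_zero_iff.mp hE
    exact ⟨y, Subsingleton.elim _ _⟩
  | succ n ih =>
    intro E _ _ _ hE F c hc hF hsm y₀
    have hNT : Nontrivial E := (finrank_pos_iff (R := ℝ)).mp (by rw [hE]; omega)
    obtain ⟨e₀, he₀⟩ := exists_ne (0 : E)
    set e : E := ‖e₀‖⁻¹ • e₀ with he_def
    have he : ‖e‖ = 1 := by
      rw [he_def, norm_smul, norm_inv, norm_norm]
      field_simp [norm_ne_zero_iff.mpr he₀]
    have hene : e ≠ 0 := by
      intro h; rw [h, norm_zero] at he; norm_num at he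
    set K := (ℝ ∙ e)ᗮ with hK_def
    have hKrank : finrank ℝ K = n := by
      have h1 := Submodule.finrank_add_finrank_orthogonal (K := (ℝ ∙ e))
      rw [finrank_span_singleton hene, hE] at h1
      rw [hK_def]
      omega
    have heK : ∀ k : K, ⟪(k : E), e⟫ = 0 := by
      intro k
      have hk : (k : E) ∈ (Submodule.span ℝ {e})ᗮ := k.2
      rw [Submodule.mem_orthogonal] at hk
      rw [real_inner_comm]
      exact hk e (Submodule.mem_span_singleton_self e)
    have hee : ⟪e, e⟫ = 1 := by
      rw [real_inner_self_eq_norm_sq, he]; norm_num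
    set φ : K → ℝ → ℝ := fun k t => ⟪F ((k : E) + t • e), e⟫ with hφ_def
    set α : ℝ := ⟪y₀, e⟫ with hα_def
    have hφmono : ∀ (k : K) (t s : ℝ),
        c * (t - s) ^ 2 ≤ (φ k t - φ k s) * (t - s) := by
      intro k t s
      have h1 := hsm ((k : E) + t • e) ((k : E) + s • e)
      have hd : ((k : E) + t • e) - ((k : E) + s • e) = (t - s) • e := by
        module
      rw [hd] at h1
      rw [real_inner_smul_right] at h1
      have hne : ‖(t - s) • e‖ ^ 2 = (t - s) ^ 2 := by
        rw [norm_smul, he]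
        simp [Real.norm_eq_abs, mul_pow, sq_abs]
      rw [hne] at h1
      have hinner : ⟪F ((k : E) + t • e) - F ((k : E) + s • e), e⟫
          = φ k t - φ k s := by
        rw [inner_sub_left]
      rw [hinner] at h1
      linarith [h1]
    have hφslope : ∀ (k : K) (t s : ℝ), s ≤ t → φ k s + c * (t - s) ≤ φ k t := by
      intro k t s hst
      rcases eq_or_lt_of_le hst with h | h
      · subst h; simp
      · have h1 := hφmono k t s
        nlinarith
    have hφcont : Continuous fun p : K × ℝ => φ p.1 p.2 := by
      apply Continuous.inner
      · exact hF.comp ((continuous_subtype_val.comp continuous_fst).add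
          (continuous_snd.smul continuous_const))
      · exact continuous_const
    have hex : ∀ k : K, ∃ t : ℝ, φ k t = α := by
      intro k
      set T : ℝ := |α - φ k 0| / c + 1 with hT_def
      have hT0 : 0 < T := by positivity
      have hcT : c * T = |α - φ k 0| * (c/c) + c := by rw [hT_def]; ring
      rw [div_self (ne_of_gt hc), mul_one] at hcT
      have h1 : α ≤ φ k T := by
        have := hφslope k T 0 (le_of_lt hT0)
        have h2 := abs_le.mp (le_refl |α - φ k 0|) |>.2
        simp only [sub_zero] at this
        rw [hcT] at this
        cases abs_cases (α - φ k 0) with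
        | inl h => linarith [h.1]
        | inr h => linarith [h.1]
      have h2 : φ k (-T) ≤ α := by
        have := hφslope k 0 (-T) (by linarith)
        have h3 : (0 : ℝ) - (-T) = T := by ring
        rw [h3, hcT] at this
        cases abs_cases (α - φ k 0) with
        | inl h => linarith [h.1]
        | inr h => linarith [h.1]
      have hIVT := intermediate_value_Icc (by linarith : -T ≤ T)
        ((hφcont.comp (Continuous.prodMk_right k)).continuousOn)
      have : α ∈ Set.Icc (φ k (-T)) (φ k T) := ⟨h2, h1⟩
      obtain ⟨t, _, ht⟩ := hIVT this
      exact ⟨t, ht⟩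
    set g : K → ℝ := fun k => Classical.choose (hex k) with hg_def
    have hg : ∀ k : K, φ k (g k) = α := fun k => Classical.choose_spec (hex k)
    have habs : ∀ (k : K) (s : ℝ), |g k - s| ≤ |φ k s - α| / c := by
      intro k s
      rcases eq_or_ne (g k) s with h | h
      · rw [h]; simp; positivity
      · have hm := hφmono k (g k) s
        rw [hg k] at hm
        have h1 : c * |g k - s| ^ 2 ≤ |φ k s - α| * |g k - s| := by
          calc c * |g k - s| ^ 2 = c * (g k - s) ^ 2 := by rw [sq_abs]
            _ ≤ (α - φ k s) * (g k - s) := hm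
            _ ≤ |(α - φ k s) * (g k - s)| := le_abs_self _
            _ = |φ k s - α| * |g k - s| := by rw [abs_mul, abs_sub_comm]
        have h2 : 0 < |g k - s| := abs_pos.mpr (sub_ne_zero.mpr h)
        rw [le_div_iff₀ hc]
        nlinarith
    have hgcont : Continuous g := by
      rw [continuous_iff_seqContinuous]
      intro kn k hkn
      have h1 : Tendsto (fun n => φ (kn n) (g k)) atTop (𝓝 (φ k (g k))) := by
        exact (hφcont.tendsto (k, g k)).comp (hkn.prodMk_nhds tendsto_const_nhds)
      rw [hg k] at h1
      have h2 : Tendsto (fun n => |φ (kn n) (g k) - α| / c) atTop (𝓝 0) := by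
        have h2a : Tendsto (fun n => φ (kn n) (g k) - α) atTop (𝓝 0) := by
          simpa using h1.sub (tendsto_const_nhds (x := α))
        have h2b := h2a.abs
        rw [abs_zero] at h2b
        simpa using h2b.div_const c
      have h3 : Tendsto (fun n => g (kn n)) atTop (𝓝 (g k)) := by
        rw [tendsto_iff_dist_tendsto_zero]
        apply squeeze_zero (fun n => dist_nonneg)
          (fun n => ?_) h2
        rw [Real.dist_eq]
        exact habs (kn n) (g k)
      exact h3
    -- orthogonal projection onto K
    have hPinner : ∀ (z : E) (w : K), ⟪z, (w : E)⟫ = ⟪((Submodule.orthogonalProjection K z : K) : E), (w : E)⟫ := by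
      intro z w
      have hzo : z - (Submodule.orthogonalProjection K z : K) ∈ Kᗮ :=
        Submodule.sub_starProjection_mem_orthogonal z
      have h0 : ⟪z - ((Submodule.orthogonalProjection K z : K) : E), (w : E)⟫ = 0 := by
        have := (Submodule.mem_orthogonal' K _).mp hzo (w : E) w.2
        exact this
      have : ⟪z, (w : E)⟫ - ⟪((Submodule.orthogonalProjection K z : K) : E), (w : E)⟫ = 0 := by
        rw [← inner_sub_left]; exact h0
      linarith
    set G : K → K := fun k => Submodule.orthogonalProjection K (F ((k : E) + g k • e)) with hG_def
    have hGcont : Continuous G := by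
      apply (Submodule.orthogonalProjection K).continuous.comp
      exact hF.comp (continuous_subtype_val.add (hgcont.smul continuous_const))
    have hGsm : ∀ k k' : K, c * ‖k - k'‖ ^ 2 ≤ ⟪G k - G k', k - k'⟫ := by
      intro k k'
      set xk : E := (k : E) + g k • e with hxk_def
      set xk' : E := (k' : E) + g k' • e with hxk'_def
      have h0 : ⟪F xk - F xk', e⟫ = 0 := by
        rw [inner_sub_left]
        have h1 : ⟪F xk, e⟫ = α := hg k
        have h2 : ⟪F xk', e⟫ = α := hg k'
        rw [h1, h2, sub_self]
      have hxx : xk - xk' = ((k - k' : K) : E) + (g k - g k') • e := by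
        rw [hxk_def, hxk'_def]
        push_cast
        module
      -- inner in K
      have hGin : ⟪G k - G k', k - k'⟫ = ⟪F xk - F xk', xk - xk'⟫ := by
        have e1 : ⟪G k - G k', k - k'⟫
            = ⟪((G k : E) - (G k' : E)), ((k - k' : K) : E)⟫ := by
          rw [Submodule.coe_inner]
          push_cast
          rfl
        rw [e1]
        have e2 : (G k : E) - (G k' : E)
            = ((Submodule.orthogonalProjection K (F xk - F xk') : K) : E) := by
          rw [hG_def]
          simp only [map_sub]
          push_cast
          rfl
        rw [e2, ← hPinner (F xk - F xk') (k - k')]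
        rw [hxx, inner_add_right, real_inner_smul_right, h0, mul_zero, add_zero]
      rw [hGin]
      have hnorm : ‖xk - xk'‖ ^ 2 = ‖((k - k' : K) : E)‖ ^ 2 + (g k - g k') ^ 2 := by
        rw [hxx, norm_add_sq_real, real_inner_smul_right, heK (k - k'), mul_zero]
        rw [norm_smul, he, mul_one, Real.norm_eq_abs, sq_abs]
        ring
      have hKnorm : ‖k - k'‖ = ‖((k - k' : K) : E)‖ := rfl
      calc c * ‖k - k'‖ ^ 2 ≤ c * ‖xk - xk'‖ ^ 2 := by
            rw [hnorm, hKnorm]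
            nlinarith [sq_nonneg (g k - g k'), le_of_lt hc]
        _ ≤ ⟪F xk - F xk', xk - xk'⟫ := hsm xk xk'
    obtain ⟨k, hk⟩ := ih ↥K inferInstance inferInstance inferInstance hKrank G c hc hGcont hGsm (Submodule.orthogonalProjection K y₀)
    refine ⟨(k : E) + g k • e, ?_⟩
    set u : E := (k : E) + g k • e with hu_def
    set z : E := F u - y₀ with hz_def
    have hz1 : ⟪z, e⟫ = 0 := by
      rw [hz_def, inner_sub_left]
      have : ⟪F u, e⟫ = α := hg k
      rw [this, hα_def, sub_self]
    have hz2 : (Submodule.orthogonalProjection K z : K) = 0 := by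
      rw [hz_def, map_sub]
      rw [show (Submodule.orthogonalProjection K (F u) : K) = G k from rfl, hk, sub_self]
    have hzo : z ∈ Kᗮ := by
      have h1 : z - ((Submodule.orthogonalProjection K z : K) : E) ∈ Kᗮ :=
        Submodule.sub_starProjection_mem_orthogonal (K := K) z
      rw [hz2] at h1
      simpa using h1
    have hKo : Kᗮ = (ℝ ∙ e) := by
      rw [hK_def]
      exact Submodule.orthogonal_orthogonal (ℝ ∙ e)
    rw [hKo] at hzo
    obtain ⟨μ, hμ⟩ := Submodule.mem_span_singleton.mp hzo
    have : μ = 0 := by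
      have h1 : ⟪μ • e, e⟫ = 0 := by rw [hμ]; exact hz1
      rw [real_inner_smul_left, hee, mul_one] at h1
      exact h1
    have hz0 : z = 0 := by rw [← hμ, this, zero_smul]
    have := sub_eq_zero.mp (hz_def ▸ hz0)
    exact this

set_option maxHeartbeats 1000000 in
set_option synthInstance.maxHeartbeats 200000 in
private lemma galerkin {X : Type*} [NormedAddCommGroup X] [NormedSpace ℝ X]
    (L : X → StrongDual ℝ X)
    (hdemi : ∀ (u : ℕ → X) (x : X), Tendsto u atTop (𝓝 x) →
      ∀ w : X, Tendsto (fun n => L (u n) w) atTop (𝓝 (L x w)))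
    (hmono : ∀ u v : X, u ≠ v → 0 < (L u - L v) (u - v))
    (f : StrongDual ℝ X) (R : ℝ)
    (hR : ∀ u : X, R ≤ ‖u‖ → (‖f‖ + 1) * ‖u‖ ≤ L u u)
    (s : Finset X) :
    ∃ u : X, u ∈ Submodule.span ℝ (s : Set X) ∧ ‖u‖ ≤ max R 0 ∧
      ∀ v ∈ Submodule.span ℝ (s : Set X), L u v = f v := by
  classical
  have hmono0 : ∀ u v : X, 0 ≤ (L u - L v) (u - v) := by
    intro u v
    rcases eq_or_ne u v with h | h
    · subst h; simp
    · exact le_of_lt (hmono u v h)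
  set V : Submodule ℝ X := Submodule.span ℝ (s : Set X) with hV_def
  haveI : FiniteDimensional ℝ V := FiniteDimensional.span_of_finite ℝ s.finite_toSet
  set k : ℕ := Module.finrank ℝ V with hk_def
  set b : Basis (Fin k) ℝ V := Module.finBasis ℝ V with hb_def
  set toE : (Fin k → ℝ) → EuclideanSpace ℝ (Fin k) :=
    fun g => (WithLp.equiv 2 (Fin k → ℝ)).symm g with htoE_def
  set Ψ : EuclideanSpace ℝ (Fin k) ≃ₗ[ℝ] V :=
    (WithLp.linearEquiv 2 ℝ (Fin k → ℝ)).trans b.equivFun.symm with hΨ_def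
  set Φ : EuclideanSpace ℝ (Fin k) → X := fun a => ((Ψ a : V) : X) with hΦ_def
  have hΦsub : ∀ a a' : EuclideanSpace ℝ (Fin k), Φ (a - a') = Φ a - Φ a' := by
    intro a a'; rw [hΦ_def]; simp
  have hΦcont : Continuous Φ := by
    apply continuous_subtype_val.comp
    exact LinearMap.continuous_of_finiteDimensional (Ψ : EuclideanSpace ℝ (Fin k) →ₗ[ℝ] V)
  have hΦmem : ∀ a, Φ a ∈ V := fun a => (Ψ a).2
  have hΦapp : ∀ a : EuclideanSpace ℝ (Fin k), Φ a = ∑ i, a i • ((b i : V) : X) := by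
    intro a
    rw [hΦ_def, hΨ_def]
    simp only [LinearEquiv.trans_apply]
    rw [Basis.equivFun_symm_apply]
    push_cast
    rfl
  have hinner : ∀ (w : StrongDual ℝ X) (a : EuclideanSpace ℝ (Fin k)),
      ⟪toE (fun i => w ((b i : V) : X)), a⟫ = w (Φ a) := by
    intro w a
    rw [PiLp.inner_apply, hΦapp]
    rw [map_sum]
    simp only [map_smul, smul_eq_mul, RCLike.inner_apply, conj_trivial]
    apply Finset.sum_congr rfl
    intro i _
    have : toE (fun i => w ((b i : V) : X)) i = w ((b i : V) : X) := rfl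
    rw [this, mul_comm]
  -- Galerkin operator
  set A : EuclideanSpace ℝ (Fin k) → EuclideanSpace ℝ (Fin k) :=
    fun a => toE (fun i => L (Φ a) ((b i : V) : X)) with hA_def
  have hA_apply : ∀ a d, ⟪A a, d⟫ = L (Φ a) (Φ d) := fun a d => hinner (L (Φ a)) d
  set y : EuclideanSpace ℝ (Fin k) := toE (fun i => f ((b i : V) : X)) with hy_def
  have hy_apply : ∀ d, ⟪y, d⟫ = f (Φ d) := fun d => hinner f d
  have hAmono : ∀ a a', (0:ℝ) ≤ ⟪A a - A a', a - a'⟫ := by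
    intro a a'
    have e1 : ⟪A a - A a', a - a'⟫
        = L (Φ a) (Φ a - Φ a') - L (Φ a') (Φ a - Φ a') := by
      rw [inner_sub_left, hA_apply, hA_apply, hΦsub]
    rw [e1]
    have h2 := hmono0 (Φ a) (Φ a')
    simpa using h2
  have hLΦ : ∀ (wX : X), Continuous fun a => L (Φ a) wX := by
    intro wX
    rw [continuous_iff_seqContinuous]
    intro an a han
    exact hdemi (fun n => Φ (an n)) (Φ a) ((hΦcont.tendsto a).comp han) wX
  have hAcont : Continuous A := by
    rw [hA_def]
    apply Continuous.comp (PiLp.continuous_toLp 2 (fun _ : Fin k => ℝ))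
    exact continuous_pi (fun i => hLΦ ((b i : V) : X))
  -- regularized finite-dimensional solutions
  have hsolve : ∀ n : ℕ, ∃ a, A a + (1 / ((n:ℝ)+1)) • a = y := by
    intro n
    have hcp : (0:ℝ) < 1/((n:ℝ)+1) := by positivity
    apply surjStrong k (EuclideanSpace ℝ (Fin k)) inferInstance inferInstance inferInstance
      finrank_euclideanSpace_fin (fun a => A a + (1/((n:ℝ)+1)) • a) (1/((n:ℝ)+1)) hcp
      (hAcont.add (continuous_const_smul _))
    intro x y'
    have e1 : (A x + (1/((n:ℝ)+1)) • x) - (A y' + (1/((n:ℝ)+1)) • y')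
        = (A x - A y') + (1/((n:ℝ)+1)) • (x - y') := by module
    rw [e1, inner_add_left, real_inner_smul_left, real_inner_self_eq_norm_sq]
    have := hAmono x y'
    nlinarith
  choose aa haa using hsolve
  have hbound : ∀ n, ‖Φ (aa n)‖ ≤ max R 0 := by
    intro n
    have h1 : ⟪A (aa n) + (1/((n:ℝ)+1)) • aa n, aa n⟫ = ⟪y, aa n⟫ := by rw [haa n]
    rw [inner_add_left, hA_apply, hy_apply, real_inner_smul_left,
      real_inner_self_eq_norm_sq] at h1
    have h2 : f (Φ (aa n)) ≤ ‖f‖ * ‖Φ (aa n)‖ := by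
      calc f (Φ (aa n)) ≤ ‖f (Φ (aa n))‖ := le_abs_self _
        _ ≤ ‖f‖ * ‖Φ (aa n)‖ := f.le_opNorm _
    by_contra hcon
    push_neg at hcon
    have hRle : R ≤ ‖Φ (aa n)‖ := le_of_lt (lt_of_le_of_lt (le_max_left R 0) hcon)
    have h3 := hR (Φ (aa n)) hRle
    have hpos : 0 < ‖Φ (aa n)‖ := lt_of_le_of_lt (le_max_right R 0) hcon
    have hnn : (0:ℝ) ≤ 1/((n:ℝ)+1) * ‖aa n‖^2 := by positivity
    nlinarith
  -- bound on the coefficients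
  set Ψc : EuclideanSpace ℝ (Fin k) ≃L[ℝ] V := Ψ.toContinuousLinearEquiv with hΨc_def
  set C : ℝ := ‖(Ψc.symm : V →L[ℝ] EuclideanSpace ℝ (Fin k))‖ * max R 0 with hC_def
  have haabdd : ∀ n, aa n ∈ Metric.closedBall (0 : EuclideanSpace ℝ (Fin k)) C := by
    intro n
    rw [Metric.mem_closedBall, dist_zero_right]
    have e1 : aa n = Ψc.symm (Ψc (aa n)) := by simp
    have e2 : ‖Ψc (aa n)‖ = ‖Φ (aa n)‖ := rfl
    calc ‖aa n‖ = ‖Ψc.symm (Ψc (aa n))‖ := by rw [← e1]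
      _ ≤ ‖(Ψc.symm : V →L[ℝ] EuclideanSpace ℝ (Fin k))‖ * ‖Ψc (aa n)‖ :=
          (Ψc.symm : V →L[ℝ] EuclideanSpace ℝ (Fin k)).le_opNorm _
      _ ≤ C := by
          rw [hC_def, e2]
          exact mul_le_mul_of_nonneg_left (hbound n) (norm_nonneg ((Ψc.symm : V →L[ℝ] EuclideanSpace ℝ (Fin k))))
  obtain ⟨a, -, φ, hφmono, hφtend⟩ :=
    tendsto_subseq_of_bounded Metric.isBounded_closedBall haabdd
  have hΦtend : Tendsto (fun n => Φ (aa (φ n))) atTop (𝓝 (Φ a)) :=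
    (hΦcont.tendsto a).comp hφtend
  have hlim : ∀ d, L (Φ a) (Φ d) = f (Φ d) := by
    intro d
    have h1 : ∀ n, L (Φ (aa n)) (Φ d) + (1/((n:ℝ)+1)) * ⟪aa n, d⟫ = f (Φ d) := by
      intro n
      have h0 := congrArg (fun z => (⟪z, d⟫ : ℝ)) (haa n)
      simpa only [inner_add_left, hA_apply, real_inner_smul_left, hy_apply] using h0
    have h2 : Tendsto (fun n => L (Φ (aa (φ n))) (Φ d)) atTop (𝓝 (L (Φ a) (Φ d))) :=
      hdemi (fun n => Φ (aa (φ n))) (Φ a) hΦtend (Φ d)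
    have h3 : Tendsto (fun n => (1/(((φ n):ℝ)+1)) * ⟪aa (φ n), d⟫) atTop (𝓝 0) := by
      have hb : ∀ n : ℕ, |(1/(((φ n):ℝ)+1)) * ⟪aa (φ n), d⟫| ≤ (1/((n:ℝ)+1)) * (|C| * ‖d‖) := by
        intro n
        rw [abs_mul]
        apply mul_le_mul
        · rw [abs_of_pos (by positivity)]
          apply one_div_le_one_div_of_le (by positivity)
          have hle : (n:ℝ) ≤ (φ n : ℝ) := by exact_mod_cast hφmono.le_apply
          linarith
        · calc |⟪aa (φ n), d⟫| ≤ ‖aa (φ n)‖ * ‖d‖ := abs_real_inner_le_norm _ _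
            _ ≤ |C| * ‖d‖ := by
                apply mul_le_mul_of_nonneg_right _ (norm_nonneg d)
                have := haabdd (φ n)
                rw [Metric.mem_closedBall, dist_zero_right] at this
                exact le_trans this (le_abs_self C)
        · positivity
        · positivity
      have hz : Tendsto (fun n : ℕ => (1/((n:ℝ)+1)) * (|C| * ‖d‖)) atTop (𝓝 0) := by
        have := (tendsto_one_div_add_atTop_nhds_zero_nat (𝕜 := ℝ)).mul_const (|C| * ‖d‖)
        simpa using this
      apply squeeze_zero_norm hb hz
    have h4 : Tendsto (fun n => L (Φ (aa (φ n))) (Φ d) + (1/(((φ n):ℝ)+1)) * ⟪aa (φ n), d⟫)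
        atTop (𝓝 (L (Φ a) (Φ d) + 0)) := h2.add h3
    have h5 : Tendsto (fun _ : ℕ => f (Φ d)) atTop (𝓝 (f (Φ d))) := tendsto_const_nhds
    have h6 : (fun n => L (Φ (aa (φ n))) (Φ d) + (1/(((φ n):ℝ)+1)) * ⟪aa (φ n), d⟫)
        = fun _ : ℕ => f (Φ d) := by
      funext n; exact h1 (φ n)
    rw [h6] at h4
    have := tendsto_nhds_unique h4 h5
    linarith
  refine ⟨Φ a, hΦmem a, ?_, ?_⟩
  · have hnt : Tendsto (fun n => ‖Φ (aa (φ n))‖) atTop (𝓝 ‖Φ a‖) := hΦtend.norm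
    exact le_of_tendsto hnt (Eventually.of_forall (fun n => hbound (φ n)))
  · intro v hv
    have : v = Φ (Ψ.symm ⟨v, hv⟩) := by
      rw [hΦ_def]
      simp
    rw [this]
    exact hlim (Ψ.symm ⟨v, hv⟩)

private lemma minty {X : Type*} [NormedAddCommGroup X] [NormedSpace ℝ X]
    (L : X → StrongDual ℝ X)
    (hdemi : ∀ (u : ℕ → X) (x : X), Tendsto u atTop (𝓝 x) →
      ∀ w : X, Tendsto (fun n => L (u n) w) atTop (𝓝 (L x w)))
    (u : X) (f : StrongDual ℝ X)
    (h : ∀ z : X, 0 ≤ (L z - f) (z - u)) : L u = f := by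
  have key : ∀ y : X, f y ≤ L u y := by
    intro y
    have hz : ∀ n : ℕ, 0 ≤ (L (u + (1/((n:ℝ)+1)) • y) - f) y := by
      intro n
      have h0 := h (u + (1/((n:ℝ)+1)) • y)
      have e1 : (u + (1/((n:ℝ)+1)) • y) - u = (1/((n:ℝ)+1)) • y := by module
      rw [e1] at h0
      rw [map_smul] at h0
      have hp : (0:ℝ) < 1/((n:ℝ)+1) := by positivity
      have h1 : 0 ≤ (1/((n:ℝ)+1)) * ((L (u + (1/((n:ℝ)+1)) • y) - f) y) := by
        simpa [smul_eq_mul] using h0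
      nlinarith [h1, hp]
    have htend : Tendsto (fun n : ℕ => u + (1/((n:ℝ)+1)) • y) atTop (𝓝 u) := by
      have h1 : Tendsto (fun n : ℕ => (1/((n:ℝ)+1)) • y) atTop (𝓝 (0:X)) := by
        have h2 := tendsto_one_div_add_atTop_nhds_zero_nat (𝕜 := ℝ)
        have h3 := h2.smul_const y
        simpa using h3
      have := tendsto_const_nhds (x := u) (f := (atTop : Filter ℕ)) |>.add h1
      simpa using this
    have hL := hdemi _ u htend y
    have hge : ∀ n : ℕ, f y ≤ L (u + (1/((n:ℝ)+1)) • y) y := by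
      intro n
      have := hz n
      simpa [ContinuousLinearMap.sub_apply] using this
    exact ge_of_tendsto hL (Eventually.of_forall hge)
  ext y
  have h1 := key y
  have h2 := key (-y)
  simp only [map_neg] at h2
  linarith

open NormedSpace in
private lemma weak_cluster_core {X : Type*} [NormedAddCommGroup X] [NormedSpace ℝ X]
    (hrefl : Function.Surjective (NormedSpace.inclusionInDoubleDual ℝ X))
    {ι : Type*} (l : Filter ι) [l.NeBot] (x : ι → X) (R : ℝ)
    (hx : ∀ i, ‖x i‖ ≤ R) :
    ∃ u : X, ‖u‖ ≤ max R 0 ∧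
      ∀ (g : StrongDual ℝ X) (c : ℝ), (∀ᶠ i in l, g (x i) ≤ c) → g u ≤ c := by
  classical
  set J := NormedSpace.inclusionInDoubleDual ℝ X with hJ_def
  set Jw : X → WeakDual ℝ (StrongDual ℝ X) :=
    fun z => StrongDual.toWeakDual (J z) with hJw_def
  set R' : ℝ := max R 0 with hR'_def
  set sB : Set (WeakDual ℝ (StrongDual ℝ X)) :=
    WeakDual.toStrongDual ⁻¹' Metric.closedBall 0 R' with hsB_def
  have hmem : ∀ i, Jw (x i) ∈ sB := by
    intro i
    rw [hsB_def, Set.mem_preimage, Metric.mem_closedBall, dist_zero_right (WeakDual.toStrongDual (Jw (x i)))]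
    have h1 : ‖J (x i)‖ ≤ ‖x i‖ := NormedSpace.double_dual_bound ℝ X (x i)
    have h2 : WeakDual.toStrongDual (Jw (x i)) = J (x i) := rfl
    rw [h2]
    exact le_trans h1 (le_trans (hx i) (le_max_left R 0))
  have hcomp := WeakDual.isCompact_closedBall (𝕜 := ℝ) (E := StrongDual ℝ X) 0 R'
  obtain ⟨ψ, hψB, hψ⟩ := hcomp.exists_mapClusterPt (u := Jw ∘ x) (f := l)
    (le_principal_iff.mpr (mem_map.mpr (Eventually.of_forall hmem)))
  obtain ⟨u, hu⟩ := hrefl (WeakDual.toStrongDual ψ)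
  have happ : ∀ g : StrongDual ℝ X, ψ g = g u := by
    intro g
    have h1 : ψ g = (WeakDual.toStrongDual ψ) g := rfl
    rw [h1, ← hu]
    rfl
  refine ⟨u, ?_, ?_⟩
  · -- norm bound
    rw [Set.mem_preimage, Metric.mem_closedBall, dist_zero_right] at hψB
    have h1 : ‖WeakDual.toStrongDual ψ‖ = ‖u‖ := by
      rw [← hu]
      exact (NormedSpace.inclusionInDoubleDualLi ℝ (E := X)).norm_map u
    rw [h1] at hψB
    exact hψB
  · intro g c hev
    have hcont : Continuous fun ρ : WeakDual ℝ (StrongDual ℝ X) => ρ g :=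
      WeakDual.eval_continuous g
    have hmc : MapClusterPt (ψ g) l (fun i => g (x i)) := by
      have := hψ.continuousAt_comp (hcont.continuousAt)
      exact this
    have hle : map (fun i => g (x i)) l ≤ 𝓟 (Set.Iic c) := by
      rw [le_principal_iff, mem_map]
      filter_upwards [hev] with i hi
      exact hi
    have hcl : ClusterPt (ψ g) (𝓟 (Set.Iic c)) := hmc.clusterPt.mono hle
    have : ψ g ∈ closure (Set.Iic c) := mem_closure_iff_clusterPt.mpr hcl
    rw [isClosed_Iic.closure_eq] at this
    rw [← happ g]
    exact this

open NormedSpace in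
private lemma weak_tendsto_core {X : Type*} [NormedAddCommGroup X] [NormedSpace ℝ X]
    (hrefl : Function.Surjective (NormedSpace.inclusionInDoubleDual ℝ X))
    (x : ℕ → X) (R : ℝ) (hx : ∀ n, ‖x n‖ ≤ R) (u : X)
    (huniq : ∀ u' : X,
      (∀ (g : StrongDual ℝ X) (c : ℝ), (∀ᶠ n in atTop, g (x n) ≤ c) → g u' ≤ c) → u' = u) :
    ∀ g : StrongDual ℝ X, Tendsto (fun n => g (x n)) atTop (𝓝 (g u)) := by
  classical
  set J := NormedSpace.inclusionInDoubleDual ℝ X with hJ_def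
  set Jw : X → WeakDual ℝ (StrongDual ℝ X) :=
    fun z => StrongDual.toWeakDual (J z) with hJw_def
  set R' : ℝ := max R 0 with hR'_def
  set sB : Set (WeakDual ℝ (StrongDual ℝ X)) :=
    WeakDual.toStrongDual ⁻¹' Metric.closedBall 0 R' with hsB_def
  have hmem : ∀ i, Jw (x i) ∈ sB := by
    intro i
    rw [hsB_def, Set.mem_preimage, Metric.mem_closedBall, dist_zero_right (WeakDual.toStrongDual (Jw (x i)))]
    have h1 : ‖J (x i)‖ ≤ ‖x i‖ := NormedSpace.double_dual_bound ℝ X (x i)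
    have h2 : WeakDual.toStrongDual (Jw (x i)) = J (x i) := rfl
    rw [h2]
    exact le_trans h1 (le_trans (hx i) (le_max_left R 0))
  have hcomp := WeakDual.isCompact_closedBall (𝕜 := ℝ) (E := StrongDual ℝ X) 0 R'
  have htendsto : Tendsto (Jw ∘ x) atTop (𝓝 (Jw u)) := by
    apply hcomp.tendsto_nhds_of_unique_mapClusterPt (Eventually.of_forall hmem)
    intro ψ hψB hψ
    obtain ⟨u', hu'⟩ := hrefl (WeakDual.toStrongDual ψ)
    have happ : ∀ g : StrongDual ℝ X, ψ g = g u' := by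
      intro g
      have h1 : ψ g = (WeakDual.toStrongDual ψ) g := rfl
      rw [h1, ← hu']
      rfl
    have hprop : ∀ (g : StrongDual ℝ X) (c : ℝ),
        (∀ᶠ n in atTop, g (x n) ≤ c) → g u' ≤ c := by
      intro g c hev
      have hcont : Continuous fun ρ : WeakDual ℝ (StrongDual ℝ X) => ρ g :=
        WeakDual.eval_continuous g
      have hmc : MapClusterPt (ψ g) atTop (fun i => g (x i)) :=
        hψ.continuousAt_comp (hcont.continuousAt)
      have hle : map (fun i => g (x i)) atTop ≤ 𝓟 (Set.Iic c) := by
        rw [le_principal_iff, mem_map]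
        filter_upwards [hev] with i hi
        exact hi
      have hcl : ClusterPt (ψ g) (𝓟 (Set.Iic c)) := hmc.clusterPt.mono hle
      have hmemc : ψ g ∈ closure (Set.Iic c) := mem_closure_iff_clusterPt.mpr hcl
      rw [isClosed_Iic.closure_eq] at hmemc
      rw [← happ g]
      exact hmemc
    have : u' = u := huniq u' hprop
    subst this
    have : WeakDual.toStrongDual ψ = WeakDual.toStrongDual (Jw u') := by
      rw [← hu']
      rfl
    exact ((WeakDual.toStrongDual_inj _ _).mp this).symm ▸ rfl
  intro g
  have hev := ((WeakDual.eval_continuous (𝕜 := ℝ) (E := StrongDual ℝ X) g).tendsto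
    (Jw u)).comp htendsto
  have he1 : (fun ρ : WeakDual ℝ (StrongDual ℝ X) => ρ g) ∘ (Jw ∘ x)
      = fun n => g (x n) := rfl
  have he2 : (Jw u) g = g u := rfl
  rw [he1, he2] at hev
  exact hev

theorem stmt10 [CompleteSpace X]
    (hrefl : Function.Surjective (NormedSpace.inclusionInDoubleDual ℝ X))
    (L : X → StrongDual ℝ X)
    (hbdd : ∀ B : Set X, IsBounded B → IsBounded (L '' B))
    (hdemi : ∀ (u : ℕ → X) (x : X), Tendsto u atTop (𝓝 x) →
      ∀ w : X, Tendsto (fun n => L (u n) w) atTop (𝓝 (L x w)))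
    (hmono : ∀ u v : X, u ≠ v → 0 < (L u - L v) (u - v))
    (hsplus : ∀ (u : ℕ → X) (x : X), WeakConvSeq u x →
      limsup (fun n => L (u n) (u n - x)) atTop ≤ 0 → Tendsto u atTop (𝓝 x))
    (hcoer : ∀ M : ℝ, ∃ R : ℝ, ∀ u : X, R ≤ ‖u‖ → M * ‖u‖ ≤ L u u) :
    Function.Bijective L ∧
    ∃ T : StrongDual ℝ X → X,
      (∀ v, L (T v) = v) ∧ (∀ u, T (L u) = u) ∧
      (∀ B : Set (StrongDual ℝ X), IsBounded B → IsBounded (T '' B)) ∧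
      (∀ (v : ℕ → StrongDual ℝ X) (w : StrongDual ℝ X),
        (∀ x : X, Tendsto (fun n => v n x) atTop (𝓝 (w x))) →
        limsup (fun n => (v n - w) (T (v n) - T w)) atTop ≤ 0 →
        Tendsto (fun n => T (v n)) atTop (𝓝 (T w))) := by
  classical
  have hmono0 : ∀ u v : X, 0 ≤ (L u - L v) (u - v) := by
    intro u v
    rcases eq_or_ne u v with h | h
    · subst h; simp
    · exact le_of_lt (hmono u v h)
  have hinj : Function.Injective L := by
    intro u v h
    by_contra hne
    have h1 := hmono u v hne
    rw [h] at h1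
    simp at h1
  have hsurj : Function.Surjective L := by
    intro f
    obtain ⟨R, hR⟩ := hcoer (‖f‖ + 1)
    choose uu huu1 huu2 huu3 using fun s : Finset X => galerkin L hdemi hmono f R hR s
    obtain ⟨u, -, hu⟩ := weak_cluster_core hrefl (atTop : Filter (Finset X)) uu (max R 0) huu2
    refine ⟨u, minty L hdemi u f ?_⟩
    intro z
    have h1 : (L z - f) u ≤ (L z - f) z := by
      apply hu (L z - f) ((L z - f) z)
      filter_upwards [eventually_ge_atTop ({z} : Finset X)] with s hs
      have hzmem : z ∈ (s : Set X) := by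
        have := Finset.singleton_subset_iff.mp hs
        exact_mod_cast this
      have hzs : z ∈ Submodule.span ℝ ((s : Set X)) := Submodule.subset_span hzmem
      have hA := huu3 s z hzs
      have hB := huu3 s (uu s) (huu1 s)
      have hm := hmono0 z (uu s)
      simp only [ContinuousLinearMap.sub_apply, map_sub] at hm ⊢
      linarith
    have h2 : (L z - f) (z - u) = (L z - f) z - (L z - f) u := by rw [map_sub]
    rw [h2]
    linarith
  -- the inverse map
  set T : StrongDual ℝ X → X := fun v => Classical.choose (hsurj v) with hT_def
  have hT1 : ∀ v, L (T v) = v := fun v => Classical.choose_spec (hsurj v)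
  have hT2 : ∀ u, T (L u) = u := fun u => hinj (hT1 (L u))
  -- boundedness of T on norm-bounded sets of functionals
  have hTbd : ∀ C : ℝ, ∃ R' : ℝ, ∀ v : StrongDual ℝ X, ‖v‖ ≤ C → ‖T v‖ ≤ R' := by
    intro C
    obtain ⟨R, hR⟩ := hcoer (C + 1)
    refine ⟨max R 0, ?_⟩
    intro v hv
    by_contra hcon
    push_neg at hcon
    have hRle : R ≤ ‖T v‖ := le_trans (le_max_left R 0) hcon.le
    have h1 := hR (T v) hRle
    rw [hT1 v] at h1
    have h2 : v (T v) ≤ C * ‖T v‖ := by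
      calc v (T v) ≤ ‖v (T v)‖ := le_abs_self _
        _ ≤ ‖v‖ * ‖T v‖ := v.le_opNorm _
        _ ≤ C * ‖T v‖ := mul_le_mul_of_nonneg_right hv (norm_nonneg _)
    have hpos : 0 < ‖T v‖ := lt_of_le_of_lt (le_max_right R 0) hcon
    nlinarith
  refine ⟨⟨hinj, hsurj⟩, T, hT1, hT2, ?_, ?_⟩
  · intro B hB
    obtain ⟨C, hC⟩ := isBounded_iff_forall_norm_le.mp hB
    obtain ⟨R', hR'⟩ := hTbd C
    rw [isBounded_iff_forall_norm_le]
    refine ⟨R', ?_⟩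
    rintro x ⟨v, hv, rfl⟩
    exact hR' v (hC v hv)
  · intro v w hvw hls
    set un : ℕ → X := fun n => T (v n) with hun_def
    set u0 : X := T w with hu0_def
    have hLn : ∀ n, L (un n) = v n := fun n => hT1 (v n)
    have hL0 : L u0 = w := hT1 w
    -- uniform bound on the functionals
    have hpb : ∀ x : X, ∃ C : ℝ, ∀ n, ‖v n x‖ ≤ C := by
      intro x
      obtain ⟨C, hC⟩ := ((hvw x).norm).bddAbove_range
      exact ⟨C, fun n => hC (Set.mem_range_self n)⟩
    obtain ⟨C', hC'⟩ := banach_steinhaus hpb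
    set C'' : ℝ := max C' ‖w‖ with hC''_def
    obtain ⟨R2, hR2⟩ := hTbd C''
    have hub : ∀ n, ‖un n‖ ≤ R2 := fun n =>
      hR2 (v n) (le_trans (hC' n) (le_max_left _ _))
    have hub0 : ‖u0‖ ≤ R2 := hR2 w (le_max_right _ _)
    -- the nonnegative sequence
    set aseq : ℕ → ℝ := fun n => (v n - w) (un n - u0) with haseq_def
    have ha0 : ∀ n, 0 ≤ aseq n := by
      intro n
      have := hmono0 (un n) u0
      rw [hLn n, hL0] at this
      exact this
    have habdd : ∀ n, aseq n ≤ (C' + ‖w‖) * (2 * |R2|) := by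
      intro n
      have h1 : aseq n ≤ ‖v n - w‖ * ‖un n - u0‖ := by
        calc aseq n ≤ ‖(v n - w) (un n - u0)‖ := le_abs_self _
          _ ≤ ‖v n - w‖ * ‖un n - u0‖ := (v n - w).le_opNorm _
      have h2 : ‖v n - w‖ ≤ C' + ‖w‖ := by
        calc ‖v n - w‖ ≤ ‖v n‖ + ‖w‖ := norm_sub_le _ _
          _ ≤ C' + ‖w‖ := by linarith [hC' n]
      have h3 : ‖un n - u0‖ ≤ 2 * |R2| := by
        calc ‖un n - u0‖ ≤ ‖un n‖ + ‖u0‖ := norm_sub_le _ _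
          _ ≤ 2 * |R2| := by
              have := le_abs_self R2
              linarith [hub n, hub0]
      calc aseq n ≤ ‖v n - w‖ * ‖un n - u0‖ := h1
        _ ≤ (C' + ‖w‖) * (2 * |R2|) := by
            apply mul_le_mul h2 h3 (norm_nonneg _)
            linarith [hC' 0, norm_nonneg (v 0), norm_nonneg w]
    have haten : Tendsto aseq atTop (𝓝 0) := by
      apply tendsto_order.mpr
      constructor
      · intro b hb
        exact Eventually.of_forall (fun n => lt_of_lt_of_le hb (ha0 n))
      · intro b hb
        have hbd : IsBoundedUnder (· ≤ ·) atTop aseq :=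
          isBoundedUnder_of ⟨(C' + ‖w‖) * (2 * |R2|), habdd⟩
        exact eventually_lt_of_limsup_lt (lt_of_le_of_lt hls hb) hbd
    -- weak convergence of un to u0
    have hwc : ∀ g : StrongDual ℝ X, Tendsto (fun n => g (un n)) atTop (𝓝 (g u0)) := by
      apply weak_tendsto_core hrefl un R2 hub u0
      intro u' hprop
      have hkey : ∀ z : X, 0 ≤ (L z - w) (z - u') := by
        intro z
        have hle : (L z - w) u' ≤ (L z - w) z := by
          apply le_of_forall_pos_le_add
          intro ε hε
          apply hprop (L z - w) ((L z - w) z + ε)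
          have h3 : Tendsto (fun n => (v n - w) z - aseq n - (v n - w) u0) atTop (𝓝 0) := by
            have t1 : Tendsto (fun n => (v n - w) z) atTop (𝓝 0) := by
              have := (hvw z).sub (tendsto_const_nhds (x := w z))
              simpa [ContinuousLinearMap.sub_apply] using this
            have t2 : Tendsto (fun n => (v n - w) u0) atTop (𝓝 0) := by
              have := (hvw u0).sub (tendsto_const_nhds (x := w u0))
              simpa [ContinuousLinearMap.sub_apply] using this
            have := (t1.sub haten).sub t2
            simpa using this
          filter_upwards [h3.eventually (eventually_gt_nhds (show -ε < 0 by linarith))]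
            with n hn
          have hm := hmono0 z (un n)
          rw [hLn n] at hm
          have hax : aseq n = (v n) (un n) - (v n) u0 - (w (un n) - w u0) := by
            simp only [haseq_def, ContinuousLinearMap.sub_apply, map_sub]
            ring
          simp only [ContinuousLinearMap.sub_apply, map_sub] at hm hn ⊢
          linarith
        have h2 : (L z - w) (z - u') = (L z - w) z - (L z - w) u' := by rw [map_sub]
        rw [h2]
        linarith
      have hLu' : L u' = w := minty L hdemi u' w hkey
      exact hinj (hLu'.trans hL0.symm)
    -- strong convergence via (S₊)
    have hweakseq : WeakConvSeq un u0 := fun g => hwc g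
    have hlim2 : Tendsto (fun n => L (un n) (un n - u0)) atTop (𝓝 0) := by
      have t1 : Tendsto (fun n => w (un n) - w u0) atTop (𝓝 0) := by
        have := (hwc w).sub (tendsto_const_nhds (x := w u0))
        simpa using this
      have t2 := haten.add t1
      rw [add_zero] at t2
      have he : (fun n => aseq n + (w (un n) - w u0)) = fun n => L (un n) (un n - u0) := by
        funext n
        rw [haseq_def, hLn n]
        simp only [ContinuousLinearMap.sub_apply, map_sub]
        ring
      rw [he] at t2
      exact t2
    have hlimsup : limsup (fun n => L (un n) (un n - u0)) atTop ≤ 0 :=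
      le_of_eq (hlim2.limsup_eq)
    exact hsplus un u0 hweakseq hlimsup
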